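/- Let M and N be metric spaces, let P be a Borel probability measure on M × N such that z ↦ d_M(p₀, z.1) and z ↦ d_N(q₀, z.2) are integrable for some (p₀, q₀), and let K be a compact subset of M × N. Fix ε ∈ (0, 1) and define F(α, m) = ∫ d_α(m, z) dP(z) for α ∈ [ε, 2−ε] and m ∈ M × N. Suppose m⋆ : [ε, 2−ε] → M × N is a map such that for every α ∈ [ε, 2−ε], m⋆(α) ∈ K, F(α, m⋆(α)) ≤ F(α, u) for all u ∈ K, and m⋆(α) is the only point of K with this minimizing property. Then m⋆ is continuous on [ε, 2−ε]. -/
import Mathlib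


open MeasureTheory Filter

/-- The scaled product distance
`d_α((p,q),(x,y)) = √(α·d_M(p,x)² + (2−α)·d_N(q,y)²)`. -/
noncomputable def dAlpha {M N : Type*} [MetricSpace M] [MetricSpace N]
    (α : ℝ) (m z : M × N) : ℝ :=
  Real.sqrt (α * dist m.1 z.1 ^ 2 + (2 - α) * dist m.2 z.2 ^ 2)

lemma dAlpha_cont_integral {M N : Type*} [MetricSpace M] [MetricSpace N]
    [MeasurableSpace M] [MeasurableSpace N] [BorelSpace M] [BorelSpace N]
    (P : Measure (M × N)) [IsProbabilityMeasure P]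
    (p₀ : M) (q₀ : N)
    (hM : Integrable (fun z : M × N => dist p₀ z.1) P)
    (hN : Integrable (fun z : M × N => dist q₀ z.2) P) :
    Continuous (fun p : ℝ × (M × N) => ∫ z, dAlpha p.1 p.2 z ∂P) := by
  rw [continuous_iff_continuousAt]
  rintro ⟨α₀, m₀⟩
  have hC2 : (0:ℝ) ≤ |α₀| + 3 := by positivity
  apply continuousAt_of_dominated (bound := fun z =>
      Real.sqrt (|α₀| + 3) *
        ((1 + dist m₀.1 p₀ + dist p₀ z.1) + (1 + dist m₀.2 q₀ + dist q₀ z.2)))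
  · filter_upwards with p
    have h1 : Measurable fun z : M × N => dist p.2.1 z.1 :=
      (continuous_const.dist continuous_id).measurable.comp measurable_fst
    have h2 : Measurable fun z : M × N => dist p.2.2 z.2 :=
      (continuous_const.dist continuous_id).measurable.comp measurable_snd
    exact (((h1.pow_const 2).const_mul _).add
      ((h2.pow_const 2).const_mul _)).sqrt.aestronglyMeasurable
  · filter_upwards [Metric.ball_mem_nhds (α₀, m₀) one_pos] with p hp
    refine Filter.Eventually.of_forall fun z => ?_
    obtain ⟨α, m⟩ := p
    set a := dist m.1 z.1 with ha
    set b := dist m.2 z.2 with hb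
    have ha0 : 0 ≤ a := dist_nonneg
    have hb0 : 0 ≤ b := dist_nonneg
    have hd : dist (α, m) (α₀, m₀) < 1 := hp
    rw [Prod.dist_eq, max_lt_iff] at hd
    obtain ⟨hd1, hdm⟩ := hd
    rw [Prod.dist_eq, max_lt_iff] at hdm
    obtain ⟨hdm1, hdm2⟩ := hdm
    have hdα : |α - α₀| < 1 := by simpa [Real.dist_eq] using hd1
    obtain ⟨hdα1, hdα2⟩ := abs_lt.mp hdα
    have hαle : α ≤ |α₀| + 3 := by
      nlinarith [le_abs_self α₀, neg_abs_le α₀]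
    have hαle2 : 2 - α ≤ |α₀| + 3 := by
      nlinarith [le_abs_self α₀, neg_abs_le α₀]
    have haA : a ≤ 1 + dist m₀.1 p₀ + dist p₀ z.1 := by
      calc a ≤ dist m.1 m₀.1 + dist m₀.1 p₀ + dist p₀ z.1 := dist_triangle4 _ _ _ _
        _ ≤ 1 + dist m₀.1 p₀ + dist p₀ z.1 := by linarith
    have hbB : b ≤ 1 + dist m₀.2 q₀ + dist q₀ z.2 := by
      calc b ≤ dist m.2 m₀.2 + dist m₀.2 q₀ + dist q₀ z.2 := dist_triangle4 _ _ _ _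
        _ ≤ 1 + dist m₀.2 q₀ + dist q₀ z.2 := by linarith
    have key : α * a ^ 2 + (2 - α) * b ^ 2 ≤ (|α₀| + 3) * (a + b) ^ 2 := by
      nlinarith [sq_nonneg a, sq_nonneg b, mul_nonneg ha0 hb0]
    have h1 : dAlpha α m z ≤ Real.sqrt ((|α₀| + 3) * (a + b) ^ 2) :=
      Real.sqrt_le_sqrt key
    have h2 : Real.sqrt ((|α₀| + 3) * (a + b) ^ 2)
        = Real.sqrt (|α₀| + 3) * (a + b) := by
      rw [Real.sqrt_mul hC2, Real.sqrt_sq (by linarith)]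
    have h3 : dAlpha α m z ≤ Real.sqrt (|α₀| + 3) * (a + b) := h2 ▸ h1
    have hnn : 0 ≤ dAlpha α m z := Real.sqrt_nonneg _
    rw [Real.norm_eq_abs, abs_of_nonneg hnn]
    calc dAlpha α m z ≤ Real.sqrt (|α₀| + 3) * (a + b) := h3
      _ ≤ Real.sqrt (|α₀| + 3) *
          ((1 + dist m₀.1 p₀ + dist p₀ z.1) + (1 + dist m₀.2 q₀ + dist q₀ z.2)) := by
        apply mul_le_mul_of_nonneg_left _ (Real.sqrt_nonneg _)
        linarith
  · apply Integrable.const_mul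
    exact (((integrable_const _).add hM).add ((integrable_const _).add hN))
  · refine Filter.Eventually.of_forall fun z => ?_
    apply Continuous.continuousAt
    apply Real.continuous_sqrt.comp
    fun_prop

theorem stmt_9 {M N : Type*} [MetricSpace M] [MetricSpace N]
    [MeasurableSpace M] [MeasurableSpace N] [BorelSpace M] [BorelSpace N]
    (P : Measure (M × N)) [IsProbabilityMeasure P]
    (p₀ : M) (q₀ : N)
    (hM : Integrable (fun z : M × N => dist p₀ z.1) P)
    (hN : Integrable (fun z : M × N => dist q₀ z.2) P)
    (K : Set (M × N)) (hK : IsCompact K)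
    (ε : ℝ) (hε : ε ∈ Set.Ioo (0 : ℝ) 1)
    (F : ℝ → M × N → ℝ)
    (hF : ∀ α m, F α m = ∫ z, dAlpha α m z ∂P)
    (mStar : ℝ → M × N)
    (hmem : ∀ α ∈ Set.Icc ε (2 - ε), mStar α ∈ K)
    (hmin : ∀ α ∈ Set.Icc ε (2 - ε), ∀ u ∈ K, F α (mStar α) ≤ F α u)
    (huniq : ∀ α ∈ Set.Icc ε (2 - ε), ∀ m ∈ K,
      (∀ u ∈ K, F α m ≤ F α u) → m = mStar α) :
    ContinuousOn mStar (Set.Icc ε (2 - ε)) := by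
  have hG := dAlpha_cont_integral P p₀ q₀ hM hN
  set G : ℝ × (M × N) → ℝ := fun p => ∫ z, dAlpha p.1 p.2 z ∂P with hGdef
  have hFG : ∀ α m, F α m = G (α, m) := fun α m => hF α m
  intro α₀ hα₀
  have : Tendsto mStar (nhdsWithin α₀ (Set.Icc ε (2 - ε))) (nhds (mStar α₀)) := by
    rw [tendsto_iff_ultrafilter]
    intro g hg
    have hgS : Set.Icc ε (2 - ε) ∈ g := hg self_mem_nhdsWithin
    have hmapK : (g : Filter ℝ).map mStar ≤ Filter.principal K := by
      rw [Filter.le_principal_iff, Filter.mem_map]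
      exact Filter.mem_of_superset hgS fun α hα => hmem α hα
    obtain ⟨x, hxK, hx⟩ := hK.ultrafilter_le_nhds (g.map mStar) hmapK
    have htends : Tendsto mStar (g : Filter ℝ) (nhds x) := hx
    have hα : Tendsto (fun α : ℝ => α) (g : Filter ℝ) (nhds α₀) :=
      hg.trans nhdsWithin_le_nhds
    have hpair : Tendsto (fun α : ℝ => ((α : ℝ), mStar α)) (g : Filter ℝ)
        (nhds (α₀, x)) := hα.prodMk_nhds htends
    have hxmin : ∀ u ∈ K, F α₀ x ≤ F α₀ u := by
      intro u hu
      have h1 : Tendsto (fun α : ℝ => F α (mStar α)) (g : Filter ℝ)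
          (nhds (F α₀ x)) := by
        simp only [hFG]
        exact (hG.tendsto (α₀, x)).comp hpair
      have h2 : Tendsto (fun α : ℝ => F α u) (g : Filter ℝ) (nhds (F α₀ u)) := by
        simp only [hFG]
        exact (hG.tendsto (α₀, u)).comp (hα.prodMk_nhds tendsto_const_nhds)
      refine le_of_tendsto_of_tendsto h1 h2 ?_
      filter_upwards [hgS] with α hα
      exact hmin α hα u hu
    have hxeq : x = mStar α₀ := huniq α₀ hα₀ x hxK hxmin
    exact hxeq ▸ htends
  exact this
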